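/- Let p ∈ 𝔽₂[x] have degree m ≥ 1, written p = Σ_{k=0}^m p_k x^k with p_k ∈ 𝔽₂, and let h ∈ 𝔽₂[x] with deg h < m. Then the Laurent expansion coefficient sequence of h/p satisfies the linear recurrence with characteristic polynomial p: for every j ≥ 0, Σ_{k=0}^m p_k·c_{j+k}(h) = 0. -/

import Mathlib

open Polynomial

noncomputable def laurentCoeff (p h : Polynomial (ZMod 2)) (j : ℕ) : ZMod 2 :=
  PowerSeries.coeff j
    ((↑(h.reflect (p.natDegree - 1)) : PowerSeries (ZMod 2)) *
      (↑p.reverse : PowerSeries (ZMod 2))⁻¹)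

theorem laurentCoeff_linear_recurrence (m : ℕ) (hm : 1 ≤ m)
    (p : Polynomial (ZMod 2)) (hp : p.degree = (m : WithBot ℕ))
    (h : Polynomial (ZMod 2)) (hh : h.degree < (m : WithBot ℕ)) :
    ∀ j : ℕ, ∑ k ∈ Finset.range (m + 1), p.coeff k * laurentCoeff p h (j + k) = 0 := by
  intro j
  have hpm : p.natDegree = m := natDegree_eq_of_degree_eq_some hp
  have hp0 : p ≠ 0 := fun h0 => by simp [h0] at hp
  have hq0 : (PowerSeries.constantCoeff) (↑p.reverse : PowerSeries (ZMod 2)) ≠ 0 := by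
    rw [Polynomial.constantCoeff_coe, coeff_zero_reverse]
    exact leadingCoeff_ne_zero.mpr hp0
  set f : PowerSeries (ZMod 2) :=
    (↑(h.reflect (p.natDegree - 1)) : PowerSeries (ZMod 2)) * (↑p.reverse : PowerSeries (ZMod 2))⁻¹ with hf
  have hmul : (↑p.reverse : PowerSeries (ZMod 2)) * f = ↑(h.reflect (p.natDegree - 1)) := by
    rw [hf, mul_comm ((↑(h.reflect (p.natDegree - 1)) : PowerSeries (ZMod 2))), ← mul_assoc,
      PowerSeries.mul_inv_cancel _ hq0, one_mul]
  have hz : PowerSeries.coeff (j + m) ((↑p.reverse : PowerSeries (ZMod 2)) * f) = 0 := by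
    rw [hmul, Polynomial.coeff_coe, coeff_reflect]
    apply coeff_eq_zero_of_degree_lt
    refine lt_of_lt_of_le hh ?_
    have : m ≤ revAt (p.natDegree - 1) (j + m) := by
      rw [revAt_eq_self_of_lt]
      · omega
      · omega
    exact_mod_cast Nat.cast_le.mpr this
  rw [PowerSeries.coeff_mul, Finset.Nat.sum_antidiagonal_eq_sum_range_succ_mk] at hz
  rw [← hz]
  -- hz sum: ∑ i in range (j+m+1), coeff i ↑p.reverse * coeff (j+m-i) f
  rw [← Finset.sum_subset (Finset.range_subset_range.mpr (by omega : m + 1 ≤ j + m + 1))]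
  · rw [← Finset.sum_range_reflect]
    apply Finset.sum_congr rfl
    intro k hk
    rw [Finset.mem_range] at hk
    have hk' : k ≤ m := by omega
    have h1 : (m + 1 - 1 - k) = m - k := by omega
    have h3 : j + (m - k) = j + m - k := by omega
    rw [h1, Polynomial.coeff_coe, coeff_reverse, hpm, revAt_le hk', h3]
    rfl
  · intro i hi hni
    rw [Finset.mem_range] at hi
    rw [Finset.mem_range, not_lt] at hni
    rw [Polynomial.coeff_coe, coeff_reverse, hpm,
      revAt_eq_self_of_lt (show m < i by omega), coeff_eq_zero_of_degree_lt, zero_mul]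
    rw [hp]
    exact_mod_cast Nat.cast_lt.mpr (by omega)
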